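/- The assignments Z₁ e_{(n,m)} := q^{Σ_{i=1}^{ℓ} n_i} e_{(n, m+1)} and, for j ∈ {2,…,N}, Z_j e_{(n,m)} := q^{Σ_{i=1}^{N−j} n_i} · √(1 − q^{2(n_{N−j+1}+1)}) · e_{(n + δ_{N−j+1}, m)} extend to bounded linear operators Z₁,…,Z_N on the Hilbert space H = ℓ²((ℕ^ℓ) × ℤ), and these operators satisfy Z_i Z_j = q·Z_j Z_i for all i < j and Z_i* Z_j = q·Z_j Z_i* for all i ≠ j. -/

import Mathlib

noncomputable section

/-- The Hilbert space `ℓ²((ℕ^ℓ) × ℤ)`. -/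
abbrev Hsp (ℓ : ℕ) := lp (fun _ : (Fin ℓ → ℕ) × ℤ => ℂ) 2

/-- The standard orthonormal basis vector `e_{(n,m)}` of `ℓ²((ℕ^ℓ) × ℤ)`. -/
def eVec (ℓ : ℕ) (p : (Fin ℓ → ℕ) × ℤ) : Hsp ℓ := lp.single 2 p 1

namespace SphereGenAux

set_option linter.unusedSectionVars false

variable {I : Type*} [DecidableEq I]

local notation "H" => lp (fun _ : I => ℂ) 2

lemma two_toReal : (2 : ENNReal).toReal = 2 := by norm_num

lemma rpow_two_eq (x : ℝ) : x ^ ((2:ENNReal).toReal) = x ^ (2:ℕ) := by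
  rw [two_toReal, show (2:ℝ) = ((2:ℕ):ℝ) by norm_num, Real.rpow_natCast]

lemma memℓp_shift (w : I → ℂ) (g : I → I) {C : ℝ}
    (hw : ∀ i, ‖w i‖ ≤ C) (hg : Set.InjOn g {i | w i ≠ 0}) (f : H) :
    Memℓp (fun i => w i * f (g i)) 2 := by
  apply memℓp_gen
  simp only [rpow_two_eq]
  have hsum : Summable (fun j : I => ‖f j‖ ^ (2:ℕ)) := by
    have := (lp.memℓp f).summable (by rw [two_toReal]; norm_num)
    simpa only [rpow_two_eq] using this
  set S := {i : I | w i ≠ 0} with hS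
  rw [← summable_subtype_and_compl (s := S)]
  constructor
  · have hinj : Function.Injective (fun i : S => g i) := hg.injective
    have h1 : Summable (fun i : S => ‖f (g i)‖ ^ (2:ℕ)) :=
      hsum.comp_injective hinj
    apply Summable.of_nonneg_of_le (fun i => by positivity)
      (fun i => ?_) (h1.mul_left (C ^ 2))
    show ‖w i.1 * f (g i.1)‖ ^ (2:ℕ) ≤ C ^ 2 * ‖f (g i.1)‖ ^ 2
    rw [norm_mul, mul_pow]
    have : ‖w i.1‖ ^ 2 ≤ C ^ 2 :=
      pow_le_pow_left₀ (norm_nonneg _) (hw i.1) 2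
    exact mul_le_mul_of_nonneg_right this (by positivity)
  · apply summable_congr (f := fun _ : ↥Sᶜ => (0:ℝ)) ?_ |>.mp summable_zero
    rintro ⟨i, hi⟩
    have : w i = 0 := by simpa [hS] using hi
    simp [Function.comp, this]

/-- The bounded "weighted composition" operator on `ℓ²(I)`. -/
def shiftOp (w : I → ℂ) (g : I → I) {C : ℝ} (hC : 0 ≤ C)
    (hw : ∀ i, ‖w i‖ ≤ C) (hg : Set.InjOn g {i | w i ≠ 0}) : H →L[ℂ] H :=
  LinearMap.mkContinuous
    { toFun := fun f => ⟨fun i => w i * f (g i), memℓp_shift w g hw hg f⟩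
      map_add' := by
        intro f1 f2
        apply lp.ext
        funext i
        simp only [lp.coeFn_add, Pi.add_apply]
        show w i * (f1 + f2) (g i) = _
        rw [lp.coeFn_add]
        simp [mul_add]
      map_smul' := by
        intro c f
        apply lp.ext
        funext i
        simp only [lp.coeFn_smul, Pi.smul_apply, RingHom.id_apply]
        show w i * (c • f) (g i) = c • (w i * f (g i))
        rw [lp.coeFn_smul]
        simp [smul_eq_mul]
        ring }
    C
    (by
      intro f
      simp only [LinearMap.coe_mk, AddHom.coe_mk]
      set Tf : H := ⟨fun i => w i * f (g i), memℓp_shift w g hw hg f⟩ with hTf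
      have h2 : (0:ℝ) < (2:ENNReal).toReal := by rw [two_toReal]; norm_num
      have hsq : ‖Tf‖ ^ (2:ℕ) ≤ (C * ‖f‖) ^ (2:ℕ) := by
        have h1 : ‖Tf‖ ^ ((2:ENNReal).toReal) = ∑' i, ‖Tf i‖ ^ ((2:ENNReal).toReal) :=
          lp.norm_rpow_eq_tsum h2 Tf
        rw [rpow_two_eq] at h1
        simp only [rpow_two_eq] at h1
        have hfn : ‖f‖ ^ (2:ℕ) = ∑' j, ‖f j‖ ^ (2:ℕ) := by
          have := lp.norm_rpow_eq_tsum h2 f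
          rw [rpow_two_eq] at this
          simp only [rpow_two_eq] at this
          exact this
        set t : I → ℝ := fun i => ‖w i * f (g i)‖ ^ (2:ℕ) with ht
        set S := {i : I | w i ≠ 0} with hS
        have hsupp : Function.support t ⊆ S := by
          intro i hi
          simp only [Function.mem_support, ht] at hi
          intro hwi
          apply hi
          rw [hwi]
          simp
        have hsum : Summable (fun j : I => ‖f j‖ ^ (2:ℕ)) := by
          have := (lp.memℓp f).summable h2
          simpa only [rpow_two_eq] using this
        have hinj : Function.Injective (fun i : S => g i) := hg.injective
        have hcomp : Summable (fun i : S => ‖f (g i.1)‖ ^ (2:ℕ)) := hsum.comp_injective hinj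
        have hTsum : Summable (fun i : S => t i.1) := by
          apply Summable.of_nonneg_of_le (fun i => by positivity) (fun i => ?_)
            (hcomp.mul_left (C ^ 2))
          rw [ht]
          show ‖w i.1 * f (g i.1)‖ ^ (2:ℕ) ≤ _
          rw [norm_mul, mul_pow]
          exact mul_le_mul_of_nonneg_right
            (pow_le_pow_left₀ (norm_nonneg _) (hw i.1) 2) (by positivity)
        rw [h1]
        calc ∑' i, t i
            = ∑' i : S, t i.1 := (tsum_subtype_eq_of_support_subset hsupp).symm
          _ ≤ ∑' i : S, C ^ 2 * ‖f (g i.1)‖ ^ (2:ℕ) := by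
              apply Summable.tsum_le_tsum _ hTsum (hcomp.mul_left _)
              intro i
              rw [ht]
              show ‖w i.1 * f (g i.1)‖ ^ (2:ℕ) ≤ _
              rw [norm_mul, mul_pow]
              exact mul_le_mul_of_nonneg_right
                (pow_le_pow_left₀ (norm_nonneg _) (hw i.1) 2) (by positivity)
          _ = C ^ 2 * ∑' i : S, ‖f (g i.1)‖ ^ (2:ℕ) := tsum_mul_left
          _ ≤ C ^ 2 * ∑' j, ‖f j‖ ^ (2:ℕ) := by
              apply mul_le_mul_of_nonneg_left _ (by positivity)
              exact Summable.tsum_le_tsum_of_inj (fun i : S => g i.1) hinj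
                (fun c _ => by positivity) (fun i => le_refl _) hcomp hsum
          _ = (C * ‖f‖) ^ (2:ℕ) := by rw [mul_pow, hfn]
      exact (pow_le_pow_iff_left₀ (norm_nonneg Tf)
        (mul_nonneg hC (norm_nonneg f)) (two_ne_zero)).mp hsq)

@[simp] lemma shiftOp_apply (w : I → ℂ) (g : I → I) {C : ℝ} (hC : 0 ≤ C)
    (hw : ∀ i, ‖w i‖ ≤ C) (hg : Set.InjOn g {i | w i ≠ 0}) (f : H) (i : I) :
    (shiftOp w g hC hw hg f : I → ℂ) i = w i * f (g i) := rfl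

lemma shiftOp_single (w : I → ℂ) (g : I → I) {C : ℝ} (hC : 0 ≤ C)
    (hw : ∀ i, ‖w i‖ ≤ C) (hg : Set.InjOn g {i | w i ≠ 0})
    (r i₀ : I) (hi₀ : g i₀ = r) (huniq : ∀ i, w i ≠ 0 → g i = r → i = i₀) :
    shiftOp w g hC hw hg (lp.single 2 r 1) = w i₀ • lp.single 2 i₀ (1:ℂ) := by
  apply lp.ext
  funext i
  rw [lp.coeFn_smul]
  simp only [Pi.smul_apply, shiftOp_apply, smul_eq_mul]
  by_cases hi : i = i₀
  · subst hi
    rw [hi₀, lp.single_apply_self, lp.single_apply_self]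
  · rw [lp.single_apply_ne 2 i₀ _ hi, mul_zero]
    by_cases hgi : g i = r
    · by_cases hwi : w i = 0
      · rw [hwi, zero_mul]
      · exact absurd (huniq i hwi hgi) hi
    · rw [lp.single_apply_ne 2 r _ hgi, mul_zero]

lemma shiftOp_adjoint_single (w : I → ℂ) (g : I → I) {C : ℝ} (hC : 0 ≤ C)
    (hw : ∀ i, ‖w i‖ ≤ C) (hg : Set.InjOn g {i | w i ≠ 0}) (p : I) :
    ContinuousLinearMap.adjoint (shiftOp w g hC hw hg) (lp.single 2 p 1)
      = (starRingEnd ℂ) (w p) • lp.single 2 (g p) (1:ℂ) := by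
  apply ext_inner_right ℂ
  intro y
  rw [ContinuousLinearMap.adjoint_inner_left]
  rw [lp.inner_single_left, inner_smul_left]
  rw [lp.inner_single_left]
  simp only [RingHom.id_apply, RingHomCompTriple.comp_apply, shiftOp_apply]
  simp only [RCLike.inner_apply, starRingEnd_self_apply, map_one, one_mul]
  ring

lemma clm_ext_single {T S : H →L[ℂ] H}
    (h : ∀ p : I, T (lp.single 2 p 1) = S (lp.single 2 p 1)) : T = S := by
  refine ContinuousLinearMap.ext fun f => ?_
  have hf : HasSum (fun i => lp.single 2 i (f i)) f :=
    lp.hasSum_single (by norm_num) f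
  have heq : ∀ i : I, (lp.single 2 i (f i) : H) = (f i) • lp.single 2 i (1:ℂ) := by
    intro i
    rw [← lp.single_smul, smul_eq_mul, mul_one]
  have h1 : ∀ (R : H →L[ℂ] H), HasSum (fun i => (f i) • R (lp.single 2 i (1:ℂ))) (R f) := by
    intro R
    refine (hf.mapL R).congr_fun (fun i => ?_)
    rw [heq i, map_smul]
  refine (h1 T).unique ?_
  refine ((h1 S).congr_fun (fun i => ?_))
  rw [h i]

end SphereGenAux

namespace SphereGen
open SphereGenAux

set_option linter.unusedSectionVars false

variable {ℓ : ℕ} (q : ℝ)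

abbrev Idx (ℓ : ℕ) := (Fin ℓ → ℕ) × ℤ

/-- weight of `Z 0` (depends only on `n`). -/
def w0 (n : Fin ℓ → ℕ) : ℂ := (q:ℂ) ^ (∑ i, n i)

/-- index map of `Z 0`. -/
def g0 : Idx ℓ → Idx ℓ := fun p => (p.1, p.2 - 1)

/-- the sum `∑_{i<k} n i`. -/
def Sm (k : Fin ℓ) (n : Fin ℓ → ℕ) : ℕ :=
  ∑ i ∈ Finset.univ.filter (fun i : Fin ℓ => (i:ℕ) < (k:ℕ)), n i

/-- backward weight of the shift in direction `k`. -/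
def wk (k : Fin ℓ) (n : Fin ℓ → ℕ) : ℂ :=
  if n k = 0 then 0 else
    (q:ℂ) ^ (Sm k n) * ((Real.sqrt (1 - q ^ (2 * n k)) : ℝ) : ℂ)

/-- index map of the shift in direction `k`. -/
def gk (k : Fin ℓ) : Idx ℓ → Idx ℓ :=
  fun p => (Function.update p.1 k (p.1 k - 1), p.2)

/-- forward weight of the shift in direction `k`. -/
def ck (k : Fin ℓ) (n : Fin ℓ → ℕ) : ℂ :=
  (q:ℂ) ^ (Sm k n) * ((Real.sqrt (1 - q ^ (2 * (n k + 1))) : ℝ) : ℂ)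

/- ### sum bookkeeping -/

lemma Sm_update_of_ge {k t : Fin ℓ} (h : ¬ (t:ℕ) < (k:ℕ)) (n : Fin ℓ → ℕ) (v : ℕ) :
    Sm k (Function.update n t v) = Sm k n := by
  unfold Sm
  apply Finset.sum_congr rfl
  intro i hi
  apply Function.update_of_ne
  rintro rfl
  exact h (Finset.mem_filter.mp hi).2

lemma Sm_update_key {k t : Fin ℓ} (h : (t:ℕ) < (k:ℕ)) (n : Fin ℓ → ℕ) (v : ℕ) :
    Sm k (Function.update n t v) + n t = Sm k n + v := by
  unfold Sm
  have ht : t ∈ Finset.univ.filter (fun i : Fin ℓ => (i:ℕ) < (k:ℕ)) :=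
    Finset.mem_filter.mpr ⟨Finset.mem_univ _, h⟩
  rw [Finset.sum_update_of_mem ht, Finset.sdiff_singleton_eq_erase,
    ← Finset.add_sum_erase _ n ht]
  ring

lemma sum_update_key (n : Fin ℓ → ℕ) (t : Fin ℓ) (v : ℕ) :
    (∑ i, Function.update n t v i) + n t = (∑ i, n i) + v := by
  have ht : t ∈ (Finset.univ : Finset (Fin ℓ)) := Finset.mem_univ _
  rw [Finset.sum_update_of_mem ht, Finset.sdiff_singleton_eq_erase,
    ← Finset.add_sum_erase _ n ht]
  ring

lemma Sm_update_succ_of_lt {k t : Fin ℓ} (h : (t:ℕ) < (k:ℕ)) (n : Fin ℓ → ℕ) :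
    Sm k (Function.update n t (n t + 1)) = Sm k n + 1 := by
  have := Sm_update_key h n (n t + 1)
  omega

lemma Sm_update_pred_of_lt {k t : Fin ℓ} (h : (t:ℕ) < (k:ℕ)) (n : Fin ℓ → ℕ)
    (hn : n t ≠ 0) : Sm k (Function.update n t (n t - 1)) + 1 = Sm k n := by
  have := Sm_update_key h n (n t - 1)
  omega

lemma sum_update_succ (n : Fin ℓ → ℕ) (t : Fin ℓ) :
    (∑ i, Function.update n t (n t + 1) i) = (∑ i, n i) + 1 := by
  have := sum_update_key n t (n t + 1)
  omega

lemma sum_update_pred (n : Fin ℓ → ℕ) (t : Fin ℓ) (hn : n t ≠ 0) :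
    (∑ i, Function.update n t (n t - 1) i) + 1 = ∑ i, n i := by
  have := sum_update_key n t (n t - 1)
  omega

/- ### conjugation -/

lemma conj_w0 (n : Fin ℓ → ℕ) : (starRingEnd ℂ) (w0 q n) = w0 q n := by
  rw [w0, map_pow, Complex.conj_ofReal]

lemma conj_wk (k : Fin ℓ) (n : Fin ℓ → ℕ) : (starRingEnd ℂ) (wk q k n) = wk q k n := by
  rw [wk]
  split_ifs with h
  · simp
  · rw [map_mul, map_pow, Complex.conj_ofReal, Complex.conj_ofReal]

variable (hq0 : 0 < q) (hq1 : q < 1)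
include hq0 hq1

lemma norm_w0_le (n : Fin ℓ → ℕ) : ‖w0 q n‖ ≤ 1 := by
  rw [w0, norm_pow, Complex.norm_real, Real.norm_eq_abs, abs_of_pos hq0]
  exact pow_le_one₀ hq0.le hq1.le

lemma norm_wk_le (k : Fin ℓ) (n : Fin ℓ → ℕ) : ‖wk q k n‖ ≤ 1 := by
  rw [wk]
  split_ifs with h
  · simp
  · rw [norm_mul, norm_pow, Complex.norm_real, Complex.norm_real,
      Real.norm_eq_abs, Real.norm_eq_abs, abs_of_pos hq0,
      abs_of_nonneg (Real.sqrt_nonneg _)]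
    have h1 : q ^ Sm k n ≤ 1 := pow_le_one₀ hq0.le hq1.le
    have h2 : Real.sqrt (1 - q ^ (2 * n k)) ≤ 1 := by
      rw [show (1:ℝ) = Real.sqrt 1 by simp]
      apply Real.sqrt_le_sqrt
      have : 0 < q ^ (2 * n k) := pow_pos hq0 _
      simp [Real.sqrt_one]
      linarith
    calc q ^ Sm k n * Real.sqrt (1 - q ^ (2 * n k)) ≤ 1 * 1 := by
          apply mul_le_mul h1 h2 (Real.sqrt_nonneg _) zero_le_one
      _ = 1 := by ring

omit hq0 hq1

lemma injOn_g0 : Set.InjOn (g0 (ℓ := ℓ)) {p | w0 q p.1 ≠ 0} := by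
  intro a _ b _ hab
  rw [g0, g0, Prod.mk.injEq] at hab
  exact Prod.ext hab.1 (by omega)

lemma injOn_gk (k : Fin ℓ) : Set.InjOn (gk k) {p | wk q k p.1 ≠ 0} := by
  intro a ha b hb hab
  simp only [Set.mem_setOf_eq, wk, ne_eq, ite_eq_left_iff, not_forall] at ha hb
  have ha1 : a.1 k ≠ 0 := fun h => absurd h (by intro h'; exact ha.elim fun hh _ => hh h')
  have hb1 : b.1 k ≠ 0 := fun h => absurd h (by intro h'; exact hb.elim fun hh _ => hh h')
  rw [gk, gk, Prod.mk.injEq] at hab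
  refine Prod.ext ?_ hab.2
  funext t
  by_cases ht : t = k
  · subst ht
    have := congrFun hab.1 t
    rw [Function.update_self, Function.update_self] at this
    omega
  · have := congrFun hab.1 t
    rwa [Function.update_of_ne ht, Function.update_of_ne ht] at this

include hq0 hq1

/-- `Z 0`. -/
def Z0op : lp (fun _ : Idx ℓ => ℂ) 2 →L[ℂ] lp (fun _ : Idx ℓ => ℂ) 2 :=
  shiftOp (fun p : Idx ℓ => w0 q p.1) g0 zero_le_one
    (fun p => norm_w0_le q hq0 hq1 p.1) (injOn_g0 q)

/-- `Z j` for `j ≥ 1`, in terms of `k = ℓ - j`. -/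
def Zkop (k : Fin ℓ) : lp (fun _ : Idx ℓ => ℂ) 2 →L[ℂ] lp (fun _ : Idx ℓ => ℂ) 2 :=
  shiftOp (fun p : Idx ℓ => wk q k p.1) (gk k) zero_le_one
    (fun p => norm_wk_le q hq0 hq1 k p.1) (injOn_gk q k)

lemma Z0op_single (n : Fin ℓ → ℕ) (m : ℤ) :
    Z0op q hq0 hq1 (lp.single 2 ((n, m) : Idx ℓ) 1)
      = (w0 q n) • lp.single 2 ((n, m + 1) : Idx ℓ) (1:ℂ) := by
  rw [Z0op]
  exact shiftOp_single _ _ _ _ _ ((n, m) : Idx ℓ) ((n, m + 1) : Idx ℓ)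
    (by rw [g0]; exact Prod.ext rfl (by simp))
    (fun i _ hgi => by
      rw [g0, Prod.mk.injEq] at hgi
      exact Prod.ext hgi.1 (by omega))

lemma Zkop_single (k : Fin ℓ) (n : Fin ℓ → ℕ) (m : ℤ) :
    Zkop q hq0 hq1 k (lp.single 2 ((n, m) : Idx ℓ) 1)
      = (ck q k n) • lp.single 2 ((Function.update n k (n k + 1), m) : Idx ℓ) (1:ℂ) := by
  rw [Zkop]
  have key := shiftOp_single (fun p : Idx ℓ => wk q k p.1) (gk k) zero_le_one
    (fun p => norm_wk_le q hq0 hq1 k p.1) (injOn_gk q k)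
    ((n, m) : Idx ℓ) ((Function.update n k (n k + 1), m) : Idx ℓ)
    (by
      rw [gk]
      refine Prod.ext ?_ rfl
      simp only [Function.update_self]
      rw [Nat.add_sub_cancel, Function.update_idem, Function.update_eq_self])
    (fun i hwi hgi => by
      rw [gk, Prod.mk.injEq] at hgi
      have hik : i.1 k ≠ 0 := by
        intro h0
        apply hwi
        show wk q k i.1 = 0
        rw [wk, if_pos h0]
      refine Prod.ext ?_ hgi.2
      show i.1 = Function.update n k (n k + 1)
      funext t
      by_cases ht : t = k
      · subst ht
        have := congrFun hgi.1 t
        rw [Function.update_self] at this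
        rw [Function.update_self]
        omega
      · have := congrFun hgi.1 t
        rw [Function.update_of_ne ht] at this
        rw [Function.update_of_ne ht, ← this])
  rw [key]
  congr 1
  show wk q k (Function.update n k (n k + 1)) = ck q k n
  rw [wk, ck, Function.update_self, if_neg (Nat.succ_ne_zero _)]
  rw [Sm_update_of_ge (lt_irrefl _) n (n k + 1)]

lemma Z0op_adj_single (n : Fin ℓ → ℕ) (m : ℤ) :
    ContinuousLinearMap.adjoint (Z0op q hq0 hq1) (lp.single 2 ((n, m) : Idx ℓ) 1)
      = (w0 q n) • lp.single 2 ((n, m - 1) : Idx ℓ) (1:ℂ) := by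
  rw [Z0op, shiftOp_adjoint_single]
  rw [show (starRingEnd ℂ) ((fun p : Idx ℓ => w0 q p.1) (n, m)) = w0 q n from conj_w0 q n]
  rfl

lemma Zkop_adj_single (k : Fin ℓ) (n : Fin ℓ → ℕ) (m : ℤ) :
    ContinuousLinearMap.adjoint (Zkop q hq0 hq1 k) (lp.single 2 ((n, m) : Idx ℓ) 1)
      = (wk q k n) • lp.single 2 ((Function.update n k (n k - 1), m) : Idx ℓ) (1:ℂ) := by
  rw [Zkop, shiftOp_adjoint_single]
  rw [show (starRingEnd ℂ) ((fun p : Idx ℓ => wk q k p.1) (n, m)) = wk q k n from conj_wk q k n]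
  rfl


/- ### relations -/

lemma rel_Z0_Zk (k : Fin ℓ) :
    Z0op q hq0 hq1 ∘L Zkop q hq0 hq1 k
      = (q:ℂ) • (Zkop q hq0 hq1 k ∘L Z0op q hq0 hq1) := by
  apply clm_ext_single
  rintro ⟨n, m⟩
  rw [ContinuousLinearMap.comp_apply, ContinuousLinearMap.smul_apply,
    ContinuousLinearMap.comp_apply]
  rw [Zkop_single, map_smul, Z0op_single, Z0op_single, map_smul, Zkop_single,
    smul_smul, smul_smul, smul_smul]
  congr 1
  simp only [w0, ck]
  rw [sum_update_succ, pow_succ]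
  ring

lemma rel_Zk_Zk (a b : Fin ℓ) (hba : (b:ℕ) < (a:ℕ)) :
    Zkop q hq0 hq1 a ∘L Zkop q hq0 hq1 b
      = (q:ℂ) • (Zkop q hq0 hq1 b ∘L Zkop q hq0 hq1 a) := by
  have hab : a ≠ b := fun h => by subst h; omega
  apply clm_ext_single
  rintro ⟨n, m⟩
  rw [ContinuousLinearMap.comp_apply, ContinuousLinearMap.smul_apply,
    ContinuousLinearMap.comp_apply]
  rw [Zkop_single, map_smul, Zkop_single, Zkop_single, map_smul, Zkop_single,
    smul_smul, smul_smul, smul_smul]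
  simp only [ck]
  simp only [Function.update_self, Function.update_of_ne hab,
    Function.update_of_ne (Ne.symm hab)]
  rw [Function.update_comm hab]
  congr 1
  rw [Sm_update_succ_of_lt hba, Sm_update_of_ge (by omega), pow_succ]
  ring

lemma rel_Z0adj_Zk (k : Fin ℓ) :
    ContinuousLinearMap.adjoint (Z0op q hq0 hq1) ∘L Zkop q hq0 hq1 k
      = (q:ℂ) • (Zkop q hq0 hq1 k ∘L ContinuousLinearMap.adjoint (Z0op q hq0 hq1)) := by
  apply clm_ext_single
  rintro ⟨n, m⟩
  rw [ContinuousLinearMap.comp_apply, ContinuousLinearMap.smul_apply,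
    ContinuousLinearMap.comp_apply]
  rw [Zkop_single, map_smul, Z0op_adj_single, Z0op_adj_single, map_smul, Zkop_single,
    smul_smul, smul_smul, smul_smul]
  congr 1
  simp only [w0, ck]
  rw [sum_update_succ, pow_succ]
  ring

lemma rel_Zkadj_Z0 (k : Fin ℓ) :
    ContinuousLinearMap.adjoint (Zkop q hq0 hq1 k) ∘L Z0op q hq0 hq1
      = (q:ℂ) • (Z0op q hq0 hq1 ∘L ContinuousLinearMap.adjoint (Zkop q hq0 hq1 k)) := by
  apply clm_ext_single
  rintro ⟨n, m⟩
  rw [ContinuousLinearMap.comp_apply, ContinuousLinearMap.smul_apply,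
    ContinuousLinearMap.comp_apply]
  rw [Z0op_single, map_smul, Zkop_adj_single, Zkop_adj_single, map_smul, Z0op_single,
    smul_smul, smul_smul, smul_smul]
  congr 1
  by_cases h : n k = 0
  · rw [wk, if_pos h]
    ring
  · rw [w0, w0, ← sum_update_pred n k h, pow_succ]
    ring

lemma rel_Zkadj_Zk (a b : Fin ℓ) (hab : a ≠ b) :
    ContinuousLinearMap.adjoint (Zkop q hq0 hq1 a) ∘L Zkop q hq0 hq1 b
      = (q:ℂ) • (Zkop q hq0 hq1 b ∘L ContinuousLinearMap.adjoint (Zkop q hq0 hq1 a)) := by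
  apply clm_ext_single
  rintro ⟨n, m⟩
  rw [ContinuousLinearMap.comp_apply, ContinuousLinearMap.smul_apply,
    ContinuousLinearMap.comp_apply]
  rw [Zkop_single, map_smul, Zkop_adj_single, Zkop_adj_single, map_smul, Zkop_single,
    smul_smul, smul_smul, smul_smul]
  simp only [ck, wk]
  simp only [Function.update_self, Function.update_of_ne hab,
    Function.update_of_ne (Ne.symm hab)]
  rw [Function.update_comm hab]
  congr 1
  by_cases h : n a = 0
  · rw [if_pos h, if_pos h]
    ring
  · rw [if_neg h, if_neg h]
    have hvne : (a:ℕ) ≠ (b:ℕ) := fun hv => hab (Fin.ext hv)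
    rcases lt_or_gt_of_ne hvne with hlt | hgt
    · rw [Sm_update_of_ge (by omega) n (n b + 1), ← Sm_update_pred_of_lt hlt n h, pow_succ]
      ring
    · rw [Sm_update_succ_of_lt hgt, Sm_update_of_ge (by omega) n (n a - 1), pow_succ]
      ring

end SphereGen

set_option maxHeartbeats 1000000 in
theorem exists_sphere_generators (q : ℝ) (hq : q ∈ Set.Ioo (0 : ℝ) 1) (ℓ : ℕ) (hℓ : 1 ≤ ℓ) :
    ∃ Z : Fin (ℓ + 1) → (Hsp ℓ →L[ℂ] Hsp ℓ),
      (∀ (n : Fin ℓ → ℕ) (m : ℤ),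
        Z 0 (eVec ℓ (n, m)) = ((q : ℂ) ^ (∑ i, n i)) • eVec ℓ (n, m + 1)) ∧
      (∀ (j : Fin (ℓ + 1)) (hj : 1 ≤ (j : ℕ)) (n : Fin ℓ → ℕ) (m : ℤ),
        Z j (eVec ℓ (n, m))
          = (((q : ℂ) ^ (∑ i ∈ Finset.univ.filter (fun i : Fin ℓ => (i : ℕ) < ℓ - (j : ℕ)), n i))
              * ((Real.sqrt (1 - q ^ (2 * (n ⟨ℓ - (j : ℕ), by have := j.isLt; omega⟩ + 1))) : ℝ) : ℂ))
            • eVec ℓ (Function.update n ⟨ℓ - (j : ℕ), by have := j.isLt; omega⟩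
                (n ⟨ℓ - (j : ℕ), by have := j.isLt; omega⟩ + 1), m)) ∧
      (∀ i j : Fin (ℓ + 1), i < j → Z i ∘L Z j = (q : ℂ) • (Z j ∘L Z i)) ∧
      (∀ i j : Fin (ℓ + 1), i ≠ j →
        ContinuousLinearMap.adjoint (Z i) ∘L Z j
          = (q : ℂ) • (Z j ∘L ContinuousLinearMap.adjoint (Z i))) := by
  obtain ⟨hq0, hq1⟩ := hq
  refine ⟨fun j : Fin (ℓ + 1) =>
    if h : (j : ℕ) = 0 then SphereGen.Z0op q hq0 hq1
    else SphereGen.Zkop q hq0 hq1 ⟨ℓ - (j : ℕ), by have := j.isLt; omega⟩,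
    ?_, ?_, ?_, ?_⟩
  · intro n m
    have h0 : ((0 : Fin (ℓ + 1)) : ℕ) = 0 := by simp
    simp only [eVec]
    rw [dif_pos h0, SphereGen.Z0op_single q hq0 hq1 n m, SphereGen.w0]
  · intro j hj n m
    simp only [eVec]
    rw [dif_neg (by omega : ¬ ((j : ℕ) = 0))]
    have key := SphereGen.Zkop_single q hq0 hq1 ⟨ℓ - (j : ℕ), by have := j.isLt; omega⟩ n m
    rw [SphereGen.ck, SphereGen.Sm] at key
    exact key
  · intro i j hij
    have hlt : (i : ℕ) < (j : ℕ) := hij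
    have hjl := j.isLt
    have hj0 : ¬ ((j : ℕ) = 0) := by omega
    dsimp only
    by_cases hi : (i : ℕ) = 0
    · rw [dif_pos hi, dif_neg hj0]
      exact SphereGen.rel_Z0_Zk q hq0 hq1 _
    · rw [dif_neg hi, dif_neg hj0]
      exact SphereGen.rel_Zk_Zk q hq0 hq1 _ _ (by show ℓ - (j : ℕ) < ℓ - (i : ℕ); omega)
  · intro i j hij
    have hvne : (i : ℕ) ≠ (j : ℕ) := fun h => hij (Fin.ext h)
    have hil := i.isLt
    have hjl := j.isLt
    dsimp only
    by_cases hi : (i : ℕ) = 0 <;> by_cases hj : (j : ℕ) = 0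
    · exact absurd (hi.trans hj.symm) hvne
    · rw [dif_pos hi, dif_neg hj]
      exact SphereGen.rel_Z0adj_Zk q hq0 hq1 _
    · rw [dif_neg hi, dif_pos hj]
      exact SphereGen.rel_Zkadj_Z0 q hq0 hq1 _
    · rw [dif_neg hi, dif_neg hj]
      exact SphereGen.rel_Zkadj_Zk q hq0 hq1 _ _
        (Fin.ne_of_val_ne (by show ℓ - (i : ℕ) ≠ ℓ - (j : ℕ); omega))


end
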